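/- Let θ > 0 and c > −1 be real and N ≥ 1 an integer, and define q_N(y) = (−1)^N Γ(θ N + c + 1) ∑_{l=0}^{N} (−1)^l (N choose l) y^l / Γ(θ l + c + 1). Then for every real x, ∫_{(0,∞)^N} (∏_{l=1}^N (x − λ_l^θ)) · (∏_{l=1}^N λ_l^c e^{−λ_l}) · ∏_{1≤j<k≤N} (λ_k − λ_j)(λ_k^θ − λ_j^θ) dλ_1⋯dλ_N = N! · (∏_{l=1}^N Γ(θ(l−1) + c + 1)) · θ^{N(N−1)/2} · (∏_{l=1}^{N−1} l!) · q_N(x). In particular, the average of the characteristic polynomial ∏_{l=1}^N (x − λ_l^θ) with respect to the Laguerre Muttalib–Borodin ensemble equals q_N(x). -/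

import Mathlib

open MeasureTheory Finset Equiv Equiv.Perm

-- Ioi/Iio products as univ products with ite
lemma prod_Ioi_ite {n : ℕ} (j : Fin n) (G : Fin n → ℝ) :
    ∏ b ∈ Finset.Ioi j, G b = ∏ b, if j < b then G b else 1 := by
  rw [← Finset.prod_filter]
  congr 1
  ext b
  simp

lemma prod_Iio_ite {n : ℕ} (j : Fin n) (G : Fin n → ℝ) :
    ∏ b ∈ Finset.Iio j, G b = ∏ b, if b < j then G b else 1 := by
  rw [← Finset.prod_filter]
  congr 1
  ext b
  simp

lemma prod_Ioi_succAbove {n : ℕ} (j : Fin (n + 1)) (G : Fin (n + 1) → ℝ) :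
    ∏ b ∈ Finset.Ioi j, G b = ∏ b : Fin n, if j < j.succAbove b then G (j.succAbove b) else 1 := by
  rw [prod_Ioi_ite, Fin.prod_univ_succAbove _ j]
  simp

lemma prod_Iio_succAbove {n : ℕ} (j : Fin (n + 1)) (G : Fin (n + 1) → ℝ) :
    ∏ b ∈ Finset.Iio j, G b = ∏ b : Fin n, if j.succAbove b < j then G (j.succAbove b) else 1 := by
  rw [prod_Iio_ite, Fin.prod_univ_succAbove _ j]
  simp

lemma pairSplit {n : ℕ} (F : Fin (n + 1) → Fin (n + 1) → ℝ) (j : Fin (n + 1)) :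
    ∏ a, ∏ b ∈ Finset.Ioi a, F a b =
      ((∏ a ∈ Finset.Iio j, F a j) * ∏ b ∈ Finset.Ioi j, F j b) *
        ∏ a : Fin n, ∏ b ∈ Finset.Ioi a, F (j.succAbove a) (j.succAbove b) := by
  rw [Fin.prod_univ_succAbove (fun a => ∏ b ∈ Finset.Ioi a, F a b) j]
  have h1 : ∀ a : Fin n, ∏ b ∈ Finset.Ioi (j.succAbove a), F (j.succAbove a) b
      = (if j.succAbove a < j then F (j.succAbove a) j else 1) *
        ∏ b ∈ Finset.Ioi a, F (j.succAbove a) (j.succAbove b) := by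
    intro a
    rw [prod_Ioi_ite, Fin.prod_univ_succAbove _ j, prod_Ioi_ite]
    congr 1
    refine Finset.prod_congr rfl fun b _ => ?_
    simp [Fin.succAbove_lt_succAbove_iff]
  simp_rw [h1]
  rw [Finset.prod_mul_distrib]
  have h2 : ∏ a : Fin n, (if j.succAbove a < j then F (j.succAbove a) j else 1)
      = ∏ a ∈ Finset.Iio j, F a j := (prod_Iio_succAbove j (fun a => F a j)).symm
  rw [h2]
  ring

lemma prod_Iio_fact {n : ℕ} (j : Fin (n + 1)) :
    ∏ a ∈ Finset.Iio j, (((j : ℕ) : ℝ) - ((a : ℕ) : ℝ)) = ((Nat.factorial (j : ℕ)) : ℝ) := by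
  have : ∏ a ∈ Finset.Iio j, (((j : ℕ) : ℝ) - ((a : ℕ) : ℝ))
      = ∏ m ∈ Finset.Iio (j : ℕ), (((j : ℕ) : ℝ) - (m : ℝ)) := by
    rw [← Fin.map_valEmbedding_Iio, Finset.prod_map]
    rfl
  rw [this, Nat.Iio_eq_range]
  rw [← Finset.prod_range_reflect]
  have h : ∀ m ∈ Finset.range (j : ℕ), ((j : ℕ) : ℝ) - (((j : ℕ) - 1 - m : ℕ) : ℝ) = ((m + 1 : ℕ) : ℝ) := by
    intro m hm
    rw [Finset.mem_range] at hm
    have h1 : (j : ℕ) - 1 - m < (j : ℕ) := by omega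
    rw [Nat.cast_sub (by omega), Nat.cast_sub (by omega)]
    push_cast
    have : (1 : ℝ) ≤ (j : ℕ) := by exact_mod_cast Nat.one_le_iff_ne_zero.mpr (by omega)
    ring
  rw [Finset.prod_congr rfl h, ← Nat.cast_prod, Finset.prod_range_add_one_eq_factorial]

lemma prod_Ioi_fact {n : ℕ} (j : Fin (n + 1)) :
    ∏ b ∈ Finset.Ioi j, (((b : ℕ) : ℝ) - ((j : ℕ) : ℝ)) = ((Nat.factorial (n - (j : ℕ))) : ℝ) := by
  have : ∏ b ∈ Finset.Ioi j, (((b : ℕ) : ℝ) - ((j : ℕ) : ℝ))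
      = ∏ m ∈ Finset.Ioc (j : ℕ) n, ((m : ℝ) - ((j : ℕ) : ℝ)) := by
    have hm := Fin.map_valEmbedding_Ioi (a := j)
    rw [show Finset.Ioo (j : ℕ) (n + 1) = Finset.Ioc (j : ℕ) n by
      ext m; simp only [Finset.mem_Ioo, Finset.mem_Ioc]; omega] at hm
    rw [← hm, Finset.prod_map]
    rfl
  have hIoc : Finset.Ioc (j : ℕ) n = Finset.Ico ((j : ℕ) + 1) (n + 1) := by
    ext m; simp
  rw [this, hIoc, Finset.prod_Ico_eq_prod_range]
  have h : ∀ m ∈ Finset.range (n + 1 - ((j : ℕ) + 1)), (((j : ℕ) + 1 + m : ℕ) : ℝ) - ((j : ℕ) : ℝ)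
      = ((m + 1 : ℕ) : ℝ) := by
    intro m _
    push_cast
    ring
  rw [Finset.prod_congr rfl h, ← Nat.cast_prod, Finset.prod_range_add_one_eq_factorial]
  congr 2
  omega

lemma superfact : ∀ n : ℕ, (∏ a : Fin n, ∏ b ∈ Finset.Ioi a, (((b : ℕ) : ℝ) - ((a : ℕ) : ℝ)))
    = ∏ l ∈ Finset.range n, ((Nat.factorial l) : ℝ)
  | 0 => by simp
  | (n + 1) => by
    rw [pairSplit (fun a b => ((b : ℕ) : ℝ) - ((a : ℕ) : ℝ)) (Fin.last n)]
    rw [prod_Iio_fact (Fin.last n)]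
    have h2 : Finset.Ioi (Fin.last n) = ∅ := by
      ext b; simp [Fin.le_last, not_lt]
    rw [h2, Finset.prod_empty, mul_one]
    have h3 : (∏ a : Fin n, ∏ b ∈ Finset.Ioi a,
        ((((Fin.last n).succAbove b : ℕ) : ℝ) - (((Fin.last n).succAbove a : ℕ) : ℝ)))
        = ∏ a : Fin n, ∏ b ∈ Finset.Ioi a, (((b : ℕ) : ℝ) - ((a : ℕ) : ℝ)) := by
      simp [Fin.succAbove_last]
    rw [h3, superfact n, Finset.prod_range_succ, Fin.val_last]
    ring

open MeasureTheory

lemma gammaIntegrable {e : ℝ} (he : -1 < e) :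
    IntegrableOn (fun t : ℝ => t ^ e * Real.exp (-t)) (Set.Ioi 0) := by
  have h := Real.GammaIntegral_convergent (show (0:ℝ) < e + 1 by linarith)
  simp only [add_sub_cancel_right] at h
  exact h.congr_fun (fun t _ => mul_comm _ _) measurableSet_Ioi

lemma gammaIntegral {e : ℝ} (he : -1 < e) :
    ∫ t in Set.Ioi (0:ℝ), t ^ e * Real.exp (-t) = Real.Gamma (e + 1) := by
  rw [Real.Gamma_eq_integral (by linarith : (0:ℝ) < e + 1)]
  simp only [add_sub_cancel_right]
  have h : ∀ t : ℝ, t ^ e * Real.exp (-t) = Real.exp (-t) * t ^ e := fun t => mul_comm _ _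
  simp_rw [h]

lemma indicator_pi_prod {N : ℕ} (f : Fin N → ℝ → ℝ) :
    (Set.univ.pi fun _ : Fin N => Set.Ioi (0:ℝ)).indicator (fun lam => ∏ i, f i (lam i))
      = fun lam => ∏ i, (Set.Ioi (0:ℝ)).indicator (f i) (lam i) := by
  funext lam
  by_cases h : lam ∈ Set.univ.pi fun _ : Fin N => Set.Ioi (0:ℝ)
  · rw [Set.indicator_of_mem h]
    exact Finset.prod_congr rfl fun i _ =>
      (Set.indicator_of_mem (h i (Set.mem_univ i)) _).symm
  · rw [Set.indicator_of_notMem h]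
    rw [Set.mem_univ_pi] at h
    push_neg at h
    obtain ⟨i, hi⟩ := h
    exact (Finset.prod_eq_zero (Finset.mem_univ i) (Set.indicator_of_notMem hi _)).symm

lemma integrableOn_pi_prod {N : ℕ} (f : Fin N → ℝ → ℝ)
    (hf : ∀ i, IntegrableOn (f i) (Set.Ioi 0)) :
    IntegrableOn (fun lam : Fin N → ℝ => ∏ i, f i (lam i))
      (Set.univ.pi fun _ : Fin N => Set.Ioi (0:ℝ)) := by
  rw [← integrable_indicator_iff (MeasurableSet.univ_pi fun _ => measurableSet_Ioi),
    indicator_pi_prod]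
  exact Integrable.fintype_prod (𝕜 := ℝ)
    (fun i => (integrable_indicator_iff measurableSet_Ioi).mpr (hf i))

lemma setIntegral_pi_prod {N : ℕ} (f : Fin N → ℝ → ℝ) :
    ∫ lam in Set.univ.pi fun _ : Fin N => Set.Ioi (0:ℝ), ∏ i, f i (lam i)
      = ∏ i, ∫ t in Set.Ioi (0:ℝ), f i t := by
  rw [← integral_indicator (MeasurableSet.univ_pi fun _ => measurableSet_Ioi),
    indicator_pi_prod,
    integral_fintype_prod_volume_eq_prod (fun i => (Set.Ioi (0:ℝ)).indicator (f i))]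
  exact Finset.prod_congr rfl fun i _ => integral_indicator measurableSet_Ioi

lemma Gamma_add_nat (z : ℝ) (hz : 0 < z) : ∀ k : ℕ,
    Real.Gamma (z + k) = Real.Gamma z * ∏ m ∈ Finset.range k, (z + m)
  | 0 => by simp
  | (k + 1) => by
    have h1 : z + (k + 1 : ℕ) = (z + k) + 1 := by push_cast; ring
    rw [h1, Real.Gamma_add_one (by positivity), Gamma_add_nat z hz k,
      Finset.prod_range_succ]
    ring

open Polynomial in
lemma detGamma {N : ℕ} (z : Fin N → ℝ) (hz : ∀ i, 0 < z i) :
    Matrix.det (Matrix.of fun k i : Fin N => Real.Gamma (z i + k)) =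
      (∏ i, Real.Gamma (z i)) * ∏ a : Fin N, ∏ b ∈ Finset.Ioi a, (z b - z a) := by
  set p : Fin N → ℝ[X] := fun k => ∏ m ∈ Finset.range (k : ℕ), (X + C (m : ℝ)) with hp
  have h_monic : ∀ k, (p k).Monic := fun k =>
    monic_prod_of_monic _ _ fun m _ => monic_X_add_C _
  have h_deg : ∀ k : Fin N, (p k).natDegree = (k : ℕ) := by
    intro k
    show (∏ m ∈ Finset.range (k : ℕ), (X + C (m : ℝ))).natDegree = (k : ℕ)
    rw [natDegree_prod _ _ (fun m _ => (monic_X_add_C ((m:ℕ):ℝ)).ne_zero)]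
    have : ∀ m ∈ Finset.range (k : ℕ), ((X : ℝ[X]) + C ((m:ℕ):ℝ)).natDegree = 1 :=
      fun m _ => natDegree_X_add_C _
    rw [Finset.sum_congr rfl this]
    simp
  have h_eval : ∀ (t : ℝ) (k : Fin N), (p k).eval t = ∏ m ∈ Finset.range (k : ℕ), (t + m) := by
    intro t k
    rw [hp]
    simp [eval_prod]
  rw [← Matrix.det_transpose]
  have h1 : Matrix.transpose (Matrix.of fun k i : Fin N => Real.Gamma (z i + k))
      = Matrix.of fun i k : Fin N => Real.Gamma (z i) * (p k).eval (z i) := by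
    ext i k
    simp only [Matrix.transpose_apply, Matrix.of_apply]
    rw [Gamma_add_nat (z i) (hz i) k, h_eval]
  rw [h1]
  have h2 : (Matrix.of fun i k : Fin N => Real.Gamma (z i) * (p k).eval (z i))
      = Matrix.of fun i k : Fin N => (fun i => Real.Gamma (z i)) i *
          (Matrix.of fun i k : Fin N => (p k).eval (z i)) i k := rfl
  rw [h2, Matrix.det_mul_column (fun i => Real.Gamma (z i))
    (Matrix.of fun i k : Fin N => (p k).eval (z i))]
  rw [← Matrix.det_eval_matrixOfPolynomials_eq_det_vandermonde z p h_deg h_monic,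
    Matrix.det_vandermonde]

open Equiv Equiv.Perm in
lemma permSum {N : ℕ} (g : Fin N → Fin N → ℝ) :
    ∑ σ : Perm (Fin N), ∑ ρ : Perm (Fin N),
      ((sign σ : ℤ) : ℝ) * ((sign ρ : ℤ) : ℝ) * ∏ i, g (σ i) (ρ i)
      = (N.factorial : ℝ) * Matrix.det (Matrix.of fun k i => g k i) := by
  have key : ∀ ρ : Perm (Fin N),
      ∑ σ : Perm (Fin N), ((sign σ : ℤ) : ℝ) * ((sign ρ : ℤ) : ℝ) * ∏ i, g (σ i) (ρ i)
        = Matrix.det (Matrix.of fun k i => g k i) := by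
    intro ρ
    rw [Matrix.det_apply']
    rw [← Equiv.sum_comp (Equiv.mulRight ρ)
      (fun σ => ((sign σ : ℤ) : ℝ) * ((sign ρ : ℤ) : ℝ) * ∏ i, g (σ i) (ρ i))]
    refine Finset.sum_congr rfl fun τ _ => ?_
    have hsq : ((sign ρ : ℤ) : ℝ) * ((sign ρ : ℤ) : ℝ) = 1 := by
      rcases Int.units_eq_one_or (sign ρ) with h | h <;> simp [h]
    have hs : ((sign (Equiv.mulRight ρ τ) : ℤ) : ℝ) * ((sign ρ : ℤ) : ℝ)
        = ((sign τ : ℤ) : ℝ) := by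
      have h1 : Equiv.mulRight ρ τ = τ * ρ := rfl
      rw [h1, map_mul]
      push_cast
      rw [mul_assoc, hsq, mul_one]
    have hprod : ∏ i, g ((Equiv.mulRight ρ τ) i) (ρ i) = ∏ i, g (τ i) i := by
      rw [← Equiv.prod_comp ρ (fun i => g (τ i) i)]
      rfl
    rw [hs, hprod]
    rfl
  rw [Finset.sum_comm, Finset.sum_congr rfl fun ρ _ => key ρ, Finset.sum_const,
    Finset.card_univ, Fintype.card_perm, Fintype.card_fin, nsmul_eq_mul]

open Equiv Equiv.Perm in
lemma expand_integrand {N : ℕ} (θ c x : ℝ) (lam : Fin N → ℝ) (hpos : ∀ i, 0 < lam i) :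
    (∏ l, (x - lam l ^ θ)) * (∏ l, lam l ^ c * Real.exp (-lam l)) *
        ∏ j, ∏ k ∈ Finset.Ioi j, ((lam k - lam j) * (lam k ^ θ - lam j ^ θ))
    = ∑ j : Fin (N + 1), ∑ σ : Perm (Fin N), ∑ ρ : Perm (Fin N),
        ((-1 : ℝ) ^ (N + (j : ℕ)) * x ^ (j : ℕ) * ((sign σ : ℤ) : ℝ) * ((sign ρ : ℤ) : ℝ)) *
        ∏ i, (lam i ^ (((σ i : ℕ) : ℝ) + θ * ((j.succAbove (ρ i) : ℕ) : ℝ) + c) *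
          Real.exp (-lam i)) := by
  classical
  set ν : Fin (N + 1) → ℝ := Fin.snoc (fun l => lam l ^ θ) x with hν
  have hνcast : ∀ a : Fin N, ν ((Fin.last N).succAbove a) = lam a ^ θ := by
    intro a
    rw [Fin.succAbove_last]
    exact Fin.snoc_castSucc _ _ _
  have hνlast : ν (Fin.last N) = x := Fin.snoc_last _ _
  -- Step A : split the interaction product
  have hA : (∏ a, ∏ b ∈ Finset.Ioi a, ((lam b - lam a) * (lam b ^ θ - lam a ^ θ)))
      = (∏ a, ∏ b ∈ Finset.Ioi a, (lam b - lam a)) *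
        (∏ a, ∏ b ∈ Finset.Ioi a, (lam b ^ θ - lam a ^ θ)) := by
    rw [← Finset.prod_mul_distrib]
    exact Finset.prod_congr rfl fun a _ => Finset.prod_mul_distrib
  -- Step B : Vandermonde in lam as a permutation sum
  have hV1 : (∏ a, ∏ b ∈ Finset.Ioi a, (lam b - lam a))
      = ∑ σ : Perm (Fin N), ((sign σ : ℤ) : ℝ) * ∏ i, lam i ^ ((σ i : Fin N) : ℕ) := by
    rw [← Matrix.det_vandermonde lam, ← Matrix.det_transpose, Matrix.det_apply']
    rfl
  -- Step C : the extended Vandermonde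
  have hsnoc : (∏ l, (x - lam l ^ θ)) * (∏ a, ∏ b ∈ Finset.Ioi a, (lam b ^ θ - lam a ^ θ))
      = Matrix.det (Matrix.vandermonde ν) := by
    rw [Matrix.det_vandermonde, pairSplit (fun a b => ν b - ν a) (Fin.last N)]
    have h2 : Finset.Ioi (Fin.last N) = (∅ : Finset (Fin (N + 1))) := by
      ext b; simp [Fin.le_last, not_lt]
    rw [h2, Finset.prod_empty, mul_one]
    have h3 : ∏ a ∈ Finset.Iio (Fin.last N), (ν (Fin.last N) - ν a)
        = ∏ l, (x - lam l ^ θ) := by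
      rw [prod_Iio_succAbove (Fin.last N) (fun a => ν (Fin.last N) - ν a)]
      refine Finset.prod_congr rfl fun a _ => ?_
      have hlt : (Fin.last N).succAbove a < Fin.last N := by
        rw [Fin.succAbove_last]; exact Fin.castSucc_lt_last a
      rw [if_pos hlt, hνcast, hνlast]
    have h4 : (∏ a : Fin N, ∏ b ∈ Finset.Ioi a,
        (ν ((Fin.last N).succAbove b) - ν ((Fin.last N).succAbove a)))
        = ∏ a, ∏ b ∈ Finset.Ioi a, (lam b ^ θ - lam a ^ θ) := by
      refine Finset.prod_congr rfl fun a _ => Finset.prod_congr rfl fun b _ => ?_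
      rw [hνcast, hνcast]
    rw [h3, h4]
  -- Step D : Laplace expansion along the last row
  have hminor : ∀ j : Fin (N + 1),
      Matrix.det ((Matrix.vandermonde ν).submatrix (Fin.last N).succAbove j.succAbove)
      = ∑ ρ : Perm (Fin N), ((sign ρ : ℤ) : ℝ) *
          ∏ i, (lam i ^ θ) ^ ((j.succAbove (ρ i) : Fin (N + 1)) : ℕ) := by
    intro j
    rw [← Matrix.det_transpose, Matrix.det_apply']
    refine Finset.sum_congr rfl fun ρ _ => ?_
    congr 1
    refine Finset.prod_congr rfl fun i _ => ?_
    show ν ((Fin.last N).succAbove i) ^ ((j.succAbove (ρ i) : Fin (N + 1)) : ℕ) = _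
    rw [hνcast]
  have hdet2 : Matrix.det (Matrix.vandermonde ν)
      = ∑ j : Fin (N + 1), (-1 : ℝ) ^ (N + (j : ℕ)) * x ^ (j : ℕ) *
          ∑ ρ : Perm (Fin N), ((sign ρ : ℤ) : ℝ) *
            ∏ i, (lam i ^ θ) ^ ((j.succAbove (ρ i) : Fin (N + 1)) : ℕ) := by
    rw [Matrix.det_succ_row (Matrix.vandermonde ν) (Fin.last N)]
    refine Finset.sum_congr rfl fun j _ => ?_
    rw [hminor j]
    have : Matrix.vandermonde ν (Fin.last N) j = x ^ (j : ℕ) := by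
      rw [Matrix.vandermonde_apply, hνlast]
    rw [this, Fin.val_last]
  -- per-term product merge
  have hw : ∀ (σ ρ : Perm (Fin N)) (j : Fin (N + 1)), (∏ l, lam l ^ c * Real.exp (-lam l)) *
      ((∏ i, lam i ^ ((σ i : Fin N) : ℕ)) *
        ∏ i, (lam i ^ θ) ^ ((j.succAbove (ρ i) : Fin (N + 1)) : ℕ))
      = ∏ i, (lam i ^ (((σ i : ℕ) : ℝ) + θ * ((j.succAbove (ρ i) : ℕ) : ℝ) + c) *
          Real.exp (-lam i)) := by
    intro σ ρ j
    rw [← Finset.prod_mul_distrib, ← Finset.prod_mul_distrib]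
    refine Finset.prod_congr rfl fun i _ => ?_
    have ht := hpos i
    rw [← Real.rpow_natCast (lam i) ((σ i : Fin N) : ℕ),
      ← Real.rpow_natCast (lam i ^ θ) ((j.succAbove (ρ i) : Fin (N + 1)) : ℕ),
      ← Real.rpow_mul ht.le, Real.rpow_add ht, Real.rpow_add ht]
    ring
  calc (∏ l, (x - lam l ^ θ)) * (∏ l, lam l ^ c * Real.exp (-lam l)) *
        ∏ a, ∏ b ∈ Finset.Ioi a, ((lam b - lam a) * (lam b ^ θ - lam a ^ θ))
      = ((∏ a, ∏ b ∈ Finset.Ioi a, (lam b - lam a)) *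
          ((∏ l, (x - lam l ^ θ)) * ∏ a, ∏ b ∈ Finset.Ioi a, (lam b ^ θ - lam a ^ θ))) *
          (∏ l, lam l ^ c * Real.exp (-lam l)) := by rw [hA]; ring
    _ = _ := by
        rw [hsnoc, hdet2, hV1]
        conv_rhs => rw [Finset.sum_comm]
        rw [Finset.sum_mul, Finset.sum_mul]
        refine Finset.sum_congr rfl fun σ _ => ?_
        simp only [Finset.mul_sum, Finset.sum_mul]
        refine Finset.sum_congr rfl fun j _ => ?_
        refine Finset.sum_congr rfl fun ρ _ => ?_
        rw [← hw σ ρ j]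
        ring

lemma thetaPow {N : ℕ} (θ : ℝ) (f : Fin N → Fin N → ℝ) :
    ∏ a : Fin N, ∏ b ∈ Finset.Ioi a, (θ * f a b)
      = θ ^ (N * (N - 1) / 2) * ∏ a : Fin N, ∏ b ∈ Finset.Ioi a, f a b := by
  have h1 : ∀ a : Fin N, ∏ b ∈ Finset.Ioi a, (θ * f a b)
      = θ ^ (Finset.Ioi a).card * ∏ b ∈ Finset.Ioi a, f a b := by
    intro a
    rw [Finset.prod_mul_distrib, Finset.prod_const]
  rw [Finset.prod_congr rfl fun a _ => h1 a, Finset.prod_mul_distrib,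
    Finset.prod_pow_eq_pow_sum]
  congr 2
  have h2 : ∀ a : Fin N, (Finset.Ioi a).card = N - 1 - (a : ℕ) := fun a => Fin.card_Ioi a
  rw [Finset.sum_congr rfl fun a _ => h2 a, Fin.sum_univ_eq_sum_range (fun i => N - 1 - i)]
  rw [Finset.sum_range_reflect (fun i => i) N, Finset.sum_range_id]

open Equiv Equiv.Perm in
lemma detG_eval {N : ℕ} (θ c : ℝ) (j : Fin (N + 1)) (hθ : 0 < θ) (hc : -1 < c) :
    Matrix.det (Matrix.of fun k i : Fin N =>
        Real.Gamma (((k : Fin N) : ℕ) + θ * ((j.succAbove i : ℕ) : ℝ) + c + 1))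
      = (∏ i : Fin N, Real.Gamma (θ * ((j.succAbove i : ℕ) : ℝ) + c + 1)) *
        (θ ^ (N * (N - 1) / 2) *
          ∏ a : Fin N, ∏ b ∈ Finset.Ioi a,
            (((j.succAbove b : ℕ) : ℝ) - ((j.succAbove a : ℕ) : ℝ))) := by
  set z : Fin N → ℝ := fun i => θ * ((j.succAbove i : ℕ) : ℝ) + c + 1 with hz
  have hzpos : ∀ i, 0 < z i := by
    intro i
    have : (0:ℝ) ≤ θ * ((j.succAbove i : ℕ) : ℝ) := by positivity
    simp only [hz]; linarith
  have h1 : (Matrix.of fun k i : Fin N =>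
      Real.Gamma (((k : Fin N) : ℕ) + θ * ((j.succAbove i : ℕ) : ℝ) + c + 1))
      = Matrix.of fun k i : Fin N => Real.Gamma (z i + ((k : Fin N) : ℕ)) := by
    ext k i
    simp only [Matrix.of_apply, hz]
    congr 1
    ring
  rw [h1, detGamma z hzpos]
  congr 1
  have h2 : ∀ (a : Fin N) (b : Fin N), z b - z a
      = θ * ((((j.succAbove b : ℕ) : ℝ)) - (((j.succAbove a : ℕ) : ℝ))) := by
    intro a b
    simp only [hz]; ring
  rw [Finset.prod_congr rfl fun a _ => Finset.prod_congr rfl fun b _ => h2 a b]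
  exact thetaPow θ _

lemma gammaRatio {N : ℕ} (θ c : ℝ) (j : Fin (N + 1)) :
    (∏ i : Fin N, Real.Gamma (θ * ((j.succAbove i : ℕ) : ℝ) + c + 1)) *
      Real.Gamma (θ * ((j : ℕ) : ℝ) + c + 1)
    = (∏ l : Fin N, Real.Gamma (θ * ((l : ℕ) : ℝ) + c + 1)) *
      Real.Gamma (θ * (N : ℝ) + c + 1) := by
  have h := Fin.prod_univ_succAbove
    (fun s : Fin (N + 1) => Real.Gamma (θ * ((s : ℕ) : ℝ) + c + 1)) j
  have h2 := Fin.prod_univ_castSucc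
    (fun s : Fin (N + 1) => Real.Gamma (θ * ((s : ℕ) : ℝ) + c + 1))
  rw [mul_comm, ← h, h2]
  simp [Fin.coe_castSucc, Fin.val_last]

lemma Wfact {N : ℕ} (j : Fin (N + 1)) :
    (∏ a : Fin N, ∏ b ∈ Finset.Ioi a,
        (((j.succAbove b : ℕ) : ℝ) - ((j.succAbove a : ℕ) : ℝ))) *
      ((Nat.factorial (j : ℕ) : ℝ) * (Nat.factorial (N - (j : ℕ)) : ℝ))
    = ∏ l ∈ Finset.range (N + 1), (Nat.factorial l : ℝ) := by
  have h := pairSplit (fun a b : Fin (N + 1) => ((b : ℕ) : ℝ) - ((a : ℕ) : ℝ)) j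
  rw [superfact (N + 1)] at h
  rw [prod_Iio_fact j, prod_Ioi_fact j] at h
  rw [h]
  ring

lemma integral_triple_sum {ι κ γ : Type*} [Fintype ι] [Fintype κ] [Fintype γ]
    {α : Type*} [MeasurableSpace α] {μ : Measure α}
    (F : ι → κ → γ → α → ℝ) (hF : ∀ i k g, Integrable (F i k g) μ) :
    ∫ a, (∑ i, ∑ k, ∑ g, F i k g a) ∂μ = ∑ i, ∑ k, ∑ g, ∫ a, F i k g a ∂μ := by
  rw [integral_finset_sum _ (fun i _ => integrable_finset_sum _
    (fun k _ => integrable_finset_sum _ (fun g _ => hF i k g)))]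
  refine Finset.sum_congr rfl fun i _ => ?_
  rw [integral_finset_sum _ (fun k _ => integrable_finset_sum _ (fun g _ => hF i k g))]
  exact Finset.sum_congr rfl fun k _ =>
    integral_finset_sum _ (fun g _ => hF i k g)


/-- the averaged characteristic polynomial (in the variables `λ_l^θ`)
of the Laguerre Muttalib–Borodin ensemble is Konhauser's biorthogonal polynomial `q_N`. -/
theorem stmt_7 (N : ℕ) (hN : 1 ≤ N) (θ c : ℝ) (hθ : 0 < θ) (hc : -1 < c)
    (q : ℝ → ℝ)
    (hq : ∀ y : ℝ, q y =
      (-1 : ℝ) ^ N * Real.Gamma (θ * N + c + 1) *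
        ∑ l ∈ Finset.range (N + 1),
          (-1 : ℝ) ^ l * (N.choose l : ℝ) * y ^ l / Real.Gamma (θ * l + c + 1))
    (x : ℝ) :
    ∫ lam in {lam : Fin N → ℝ | ∀ i, 0 < lam i},
      (∏ l, (x - lam l ^ θ)) * (∏ l, lam l ^ c * Real.exp (-lam l)) *
        ∏ j, ∏ k ∈ Finset.Ioi j, ((lam k - lam j) * (lam k ^ θ - lam j ^ θ))
    = (N.factorial : ℝ) * (∏ l : Fin N, Real.Gamma (θ * (l : ℝ) + c + 1)) *
        θ ^ (N * (N - 1) / 2) * (∏ l ∈ Finset.range N, (Nat.factorial l : ℝ)) * q x := by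
  classical
  have hS : {lam : Fin N → ℝ | ∀ i, 0 < lam i}
      = Set.univ.pi fun _ : Fin N => Set.Ioi (0:ℝ) := by
    ext lam
    simp [Set.mem_pi]
  have hSm : MeasurableSet (Set.univ.pi fun _ : Fin N => Set.Ioi (0:ℝ)) :=
    MeasurableSet.univ_pi fun _ => measurableSet_Ioi
  rw [hS]
  have hE : ∀ (j : Fin (N + 1)) (σ ρ : Perm (Fin N)) (i : Fin N),
      (-1 : ℝ) < ((σ i : ℕ) : ℝ) + θ * ((j.succAbove (ρ i) : ℕ) : ℝ) + c := by
    intro j σ ρ i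
    have h1 : (0:ℝ) ≤ ((σ i : ℕ) : ℝ) := Nat.cast_nonneg _
    have h2 : (0:ℝ) ≤ θ * ((j.succAbove (ρ i) : ℕ) : ℝ) := by positivity
    linarith
  have hrepl := setIntegral_congr_fun (μ := (volume : Measure (Fin N → ℝ))) hSm
    (f := fun lam : Fin N → ℝ => (∏ l, (x - lam l ^ θ)) *
      (∏ l, lam l ^ c * Real.exp (-lam l)) *
        ∏ j, ∏ k ∈ Finset.Ioi j, ((lam k - lam j) * (lam k ^ θ - lam j ^ θ)))
    (g := fun lam : Fin N → ℝ => ∑ j : Fin (N + 1), ∑ σ : Perm (Fin N), ∑ ρ : Perm (Fin N),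
      ((-1 : ℝ) ^ (N + (j : ℕ)) * x ^ (j : ℕ) * ((sign σ : ℤ) : ℝ) * ((sign ρ : ℤ) : ℝ)) *
        ∏ i, (lam i ^ (((σ i : ℕ) : ℝ) + θ * ((j.succAbove (ρ i) : ℕ) : ℝ) + c) *
          Real.exp (-lam i)))
    (fun lam hlam => expand_integrand θ c x lam (fun i => hlam i (Set.mem_univ i)))
  rw [hrepl]
  have hInt : ∀ (j : Fin (N + 1)) (σ ρ : Perm (Fin N)),
      Integrable (fun lam : Fin N → ℝ =>
        ((-1 : ℝ) ^ (N + (j : ℕ)) * x ^ (j : ℕ) * ((sign σ : ℤ) : ℝ) * ((sign ρ : ℤ) : ℝ)) *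
        ∏ i, (lam i ^ (((σ i : ℕ) : ℝ) + θ * ((j.succAbove (ρ i) : ℕ) : ℝ) + c) *
          Real.exp (-lam i)))
        ((volume : Measure (Fin N → ℝ)).restrict
          (Set.univ.pi fun _ : Fin N => Set.Ioi (0:ℝ))) := by
    intro j σ ρ
    exact (integrableOn_pi_prod
      (fun i => fun t : ℝ => t ^ (((σ i : ℕ) : ℝ) + θ * ((j.succAbove (ρ i) : ℕ) : ℝ) + c) *
        Real.exp (-t))
      (fun i => gammaIntegrable (hE j σ ρ i))).const_mul _
  rw [integral_triple_sum _ hInt]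
  -- evaluate each integral
  have hval : ∀ (j : Fin (N + 1)) (σ ρ : Perm (Fin N)),
      ∫ lam in Set.univ.pi fun _ : Fin N => Set.Ioi (0:ℝ),
        ((-1 : ℝ) ^ (N + (j : ℕ)) * x ^ (j : ℕ) * ((sign σ : ℤ) : ℝ) * ((sign ρ : ℤ) : ℝ)) *
        ∏ i, (lam i ^ (((σ i : ℕ) : ℝ) + θ * ((j.succAbove (ρ i) : ℕ) : ℝ) + c) *
          Real.exp (-lam i))
      = ((-1 : ℝ) ^ (N + (j : ℕ)) * x ^ (j : ℕ) * ((sign σ : ℤ) : ℝ) * ((sign ρ : ℤ) : ℝ)) *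
        ∏ i, Real.Gamma (((σ i : ℕ) : ℝ) + θ * ((j.succAbove (ρ i) : ℕ) : ℝ) + c + 1) := by
    intro j σ ρ
    rw [integral_const_mul]
    congr 1
    rw [setIntegral_pi_prod
      (fun i => fun t : ℝ => t ^ (((σ i : ℕ) : ℝ) + θ * ((j.succAbove (ρ i) : ℕ) : ℝ) + c) *
        Real.exp (-t))]
    exact Finset.prod_congr rfl fun i _ => gammaIntegral (hE j σ ρ i)
  rw [Finset.sum_congr rfl fun j _ => Finset.sum_congr rfl fun σ _ =>
    Finset.sum_congr rfl fun ρ _ => hval j σ ρ]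
  -- per j : permutation sums give a determinant
  have hperm : ∀ j : Fin (N + 1),
      (∑ σ : Perm (Fin N), ∑ ρ : Perm (Fin N),
        ((-1 : ℝ) ^ (N + (j : ℕ)) * x ^ (j : ℕ) * ((sign σ : ℤ) : ℝ) * ((sign ρ : ℤ) : ℝ)) *
        ∏ i, Real.Gamma (((σ i : ℕ) : ℝ) + θ * ((j.succAbove (ρ i) : ℕ) : ℝ) + c + 1))
      = (-1 : ℝ) ^ (N + (j : ℕ)) * x ^ (j : ℕ) * ((N.factorial : ℝ) *
          Matrix.det (Matrix.of fun k i : Fin N =>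
            Real.Gamma (((k : Fin N) : ℕ) + θ * ((j.succAbove i : ℕ) : ℝ) + c + 1))) := by
    intro j
    rw [← permSum (fun k m : Fin N =>
      Real.Gamma (((k : ℕ) : ℝ) + θ * ((j.succAbove m : ℕ) : ℝ) + c + 1))]
    rw [Finset.mul_sum]
    refine Finset.sum_congr rfl fun σ _ => ?_
    rw [Finset.mul_sum]
    exact Finset.sum_congr rfl fun ρ _ => by ring
  rw [Finset.sum_congr rfl fun j _ => hperm j]
  -- evaluate determinants
  rw [Finset.sum_congr rfl fun j _ => by rw [detG_eval θ c j hθ hc]]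
  -- final algebra
  rw [hq x, ← Fin.sum_univ_eq_sum_range
    (fun l : ℕ => (-1 : ℝ) ^ l * (N.choose l : ℝ) * x ^ l / Real.Gamma (θ * l + c + 1)) (N + 1)]
  simp only [Finset.mul_sum]
  refine Finset.sum_congr rfl fun j _ => ?_
  have hΓj : Real.Gamma (θ * ((j : ℕ) : ℝ) + c + 1) ≠ 0 := by
    have : (0:ℝ) < θ * ((j : ℕ) : ℝ) + c + 1 := by
      have : (0:ℝ) ≤ θ * ((j : ℕ) : ℝ) := by positivity
      linarith
    exact (Real.Gamma_pos_of_pos this).ne'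
  have hfj : (Nat.factorial (j : ℕ) : ℝ) ≠ 0 := Nat.cast_ne_zero.mpr (Nat.factorial_ne_zero _)
  have hfNj : (Nat.factorial (N - (j : ℕ)) : ℝ) ≠ 0 := Nat.cast_ne_zero.mpr (Nat.factorial_ne_zero _)
  have hG : (∏ i : Fin N, Real.Gamma (θ * ((j.succAbove i : ℕ) : ℝ) + c + 1))
      = (∏ l : Fin N, Real.Gamma (θ * ((l : ℕ) : ℝ) + c + 1)) *
        Real.Gamma (θ * (N : ℝ) + c + 1) / Real.Gamma (θ * ((j : ℕ) : ℝ) + c + 1) :=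
    (eq_div_iff hΓj).mpr (gammaRatio θ c j)
  have hW : (∏ a : Fin N, ∏ b ∈ Finset.Ioi a,
        (((j.succAbove b : ℕ) : ℝ) - ((j.succAbove a : ℕ) : ℝ)))
      = (∏ l ∈ Finset.range N, (Nat.factorial l : ℝ)) * (N.factorial : ℝ) /
          ((Nat.factorial (j : ℕ) : ℝ) * (Nat.factorial (N - (j : ℕ)) : ℝ)) := by
    refine (eq_div_iff (by positivity)).mpr ?_
    rw [Wfact j, Finset.prod_range_succ]
  have hchoose : ((N.choose (j : ℕ)) : ℝ)
      = (N.factorial : ℝ) / ((Nat.factorial (j : ℕ) : ℝ) * (Nat.factorial (N - (j : ℕ)) : ℝ)) := by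
    refine (eq_div_iff (by positivity)).mpr ?_
    rw [← Nat.cast_mul, ← Nat.cast_mul]
    exact Nat.cast_inj.mpr
      (by rw [← mul_assoc]; exact Nat.choose_mul_factorial_mul_factorial (Fin.is_le j))
  rw [hG, hW, hchoose, pow_add]
  field_simp
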